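/- Let m ≥ 1 be an integer and fix a partition datum (E,V) on {1,…,3m}. Assume Σ_{i=1}^{m} |E_i| ≥ (m/2) · C(3m,2) and Σ_{j=1}^{2m+1} |V_j| ≥ (2m+1) · (3m/2). Let Π be a pairwise independent set of permutations of {1,…,3m}. Then (1/|Π|) · Σ_{π ∈ Π} δ(E, πV) ≥ 2^{−12} − 31/(3m − 1), where πV denotes the family of vertex sets whose j-th member is the image π(V_j). -/

import Mathlib

/-- A finite nonempty set `P` of permutations of a set of size `N ≥ 2` is *pairwise
independent* if for all `a ≠ b` and `c ≠ d`, the number of `π ∈ P` with `π a = c` and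
`π b = d` equals `|P| / (N(N−1))` (stated multiplicatively to avoid division). -/
def PairwiseIndepPerms {α : Type*} [DecidableEq α] (N : ℕ) (P : Finset (Equiv.Perm α)) : Prop :=
  P.Nonempty ∧
    ∀ a b c d : α, a ≠ b → c ≠ d →
      (P.filter fun π => π a = c ∧ π b = d).card * (N * (N - 1)) = P.card

/-- The density `δ(E,V)` of a partition datum on `{1,…,3m}`: `1/(m²(2m+1)⁵C(3m,2))` times
the sum over `(i₁,i₂) ∈ [m]²` and `(j₁,…,j₅) ∈ [2m+1]⁵` of
`|⋂_{k=1}^5 E_{i₁}[V_{j_k}] ∩ E_{i₂}[V_{j_k}]|`, where `E[W] = {e ∈ E : e ⊆ W}`. -/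
noncomputable def density (m : ℕ) (E : Fin m → Finset (Finset (Fin (3 * m))))
    (V : Fin (2 * m + 1) → Finset (Fin (3 * m))) : ℝ :=
  (∑ i : Fin m × Fin m, ∑ j : Fin 5 → Fin (2 * m + 1),
      ((Finset.univ.inf fun k : Fin 5 =>
        ((E i.1).filter fun e => e ⊆ V (j k)) ∩
        ((E i.2).filter fun e => e ⊆ V (j k))).card : ℝ)) /
    ((m : ℝ) ^ 2 * (2 * (m : ℝ) + 1) ^ 5 * ((3 * m).choose 2 : ℝ))

lemma card_inf_eq (m : ℕ) (E : Fin m → Finset (Finset (Fin (3 * m))))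
    (W : Fin (2 * m + 1) → Finset (Fin (3 * m))) (i : Fin m × Fin m)
    (j : Fin 5 → Fin (2 * m + 1)) :
    (Finset.univ.inf fun k : Fin 5 =>
        ((E i.1).filter fun e => e ⊆ W (j k)) ∩
        ((E i.2).filter fun e => e ⊆ W (j k))).card
    = ∑ e : Finset (Fin (3 * m)),
        (if e ∈ E i.1 then 1 else 0) * ((if e ∈ E i.2 then 1 else 0) *
          ∏ k : Fin 5, if e ⊆ W (j k) then 1 else 0) := by
  have hset : (Finset.univ.inf fun k : Fin 5 =>
        ((E i.1).filter fun e => e ⊆ W (j k)) ∩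
        ((E i.2).filter fun e => e ⊆ W (j k)))
      = Finset.univ.filter fun e => e ∈ E i.1 ∧ e ∈ E i.2 ∧ ∀ k : Fin 5, e ⊆ W (j k) := by
    ext e
    simp only [Finset.mem_inf, Finset.mem_inter, Finset.mem_filter, Finset.mem_univ, true_and]
    constructor
    · intro h
      exact ⟨(h 0 trivial).1.1, (h 0 trivial).2.1, fun k => (h k trivial).1.2⟩
    · rintro ⟨h1, h2, h3⟩ k _
      exact ⟨⟨h1, h3 k⟩, ⟨h2, h3 k⟩⟩
  rw [hset, Finset.card_filter]
  apply Finset.sum_congr rfl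
  intro e _
  rw [Finset.prod_boole]
  by_cases h1 : e ∈ E i.1 <;> by_cases h2 : e ∈ E i.2 <;>
    by_cases h3 : ∀ k : Fin 5, e ⊆ W (j k) <;> simp [h1, h2, h3]

lemma num_eq (m : ℕ) (E : Fin m → Finset (Finset (Fin (3 * m))))
    (W : Fin (2 * m + 1) → Finset (Fin (3 * m))) :
    ∑ i : Fin m × Fin m, ∑ j : Fin 5 → Fin (2 * m + 1),
      (Finset.univ.inf fun k : Fin 5 =>
        ((E i.1).filter fun e => e ⊆ W (j k)) ∩
        ((E i.2).filter fun e => e ⊆ W (j k))).card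
    = ∑ e : Finset (Fin (3 * m)),
        (Finset.univ.filter fun i => e ∈ E i).card ^ 2 *
        (Finset.univ.filter fun j => e ⊆ W j).card ^ 5 := by
  have h1 : ∀ e : Finset (Fin (3 * m)),
      (Finset.univ.filter fun i => e ∈ E i).card ^ 2 *
        (Finset.univ.filter fun j => e ⊆ W j).card ^ 5
      = ∑ i : Fin m × Fin m, ∑ j : Fin 5 → Fin (2 * m + 1),
          (if e ∈ E i.1 then 1 else 0) * ((if e ∈ E i.2 then 1 else 0) *
            ∏ k : Fin 5, if e ⊆ W (j k) then 1 else 0) := by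
    intro e
    rw [Finset.card_filter (fun i => e ∈ E i), Finset.card_filter (fun j => e ⊆ W j),
        Fintype.sum_pow (fun j => if e ⊆ W j then (1 : ℕ) else 0) 5, sq,
        Finset.sum_mul_sum]
    simp only [Fintype.sum_prod_type, Finset.sum_mul, Finset.mul_sum]
    rw [Finset.sum_comm]
    refine Finset.sum_congr rfl fun i1 _ => ?_
    rw [Finset.sum_comm]
    exact Finset.sum_congr rfl fun i2 _ => Finset.sum_congr rfl fun jv _ => by ring
  simp only [card_inf_eq m E W, h1]
  conv_rhs => rw [Finset.sum_comm]
  exact Finset.sum_congr rfl fun i _ => Finset.sum_comm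

lemma density_eq (m : ℕ) (E : Fin m → Finset (Finset (Fin (3 * m))))
    (W : Fin (2 * m + 1) → Finset (Fin (3 * m))) :
    density m E W = ((∑ e : Finset (Fin (3 * m)),
      (Finset.univ.filter fun i => e ∈ E i).card ^ 2 *
      (Finset.univ.filter fun j => e ⊆ W j).card ^ 5 : ℕ) : ℝ) /
    ((m : ℝ) ^ 2 * (2 * (m : ℝ) + 1) ^ 5 * ((3 * m).choose 2 : ℝ)) := by
  rw [density]
  congr 1
  rw [← num_eq m E W]
  push_cast
  rfl

lemma exp_count (m : ℕ) (hm : 1 ≤ m) (V : Fin (2 * m + 1) → Finset (Fin (3 * m)))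
    (P : Finset (Equiv.Perm (Fin (3 * m)))) (hP : PairwiseIndepPerms (3 * m) P)
    (x y : Fin (3 * m)) (hxy : x ≠ y) :
    (∑ π ∈ P, (Finset.univ.filter fun j =>
        ({x, y} : Finset (Fin (3 * m))) ⊆ (V j).image π).card) * (3 * m * (3 * m - 1))
      = (∑ j, (V j).offDiag.card) * P.card := by
  have h1 : ∀ π : Equiv.Perm (Fin (3 * m)),
      (Finset.univ.filter fun j => ({x, y} : Finset (Fin (3 * m))) ⊆ (V j).image π).card
      = ∑ j, if ({x, y} : Finset (Fin (3 * m))) ⊆ (V j).image π then 1 else 0 := fun π =>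
    Finset.card_filter _ _
  simp only [h1]
  rw [Finset.sum_comm, Finset.sum_mul, Finset.sum_mul]
  refine Finset.sum_congr rfl fun j _ => ?_
  rw [← Finset.card_filter]
  -- now : (P.filter fun π => {x,y} ⊆ (V j).image π).card * (3*m*(3*m-1)) = (V j).offDiag.card * P.card
  have hfib : (P.filter fun π : Equiv.Perm (Fin (3 * m)) =>
      ({x, y} : Finset (Fin (3 * m))) ⊆ (V j).image π).card
      = ∑ p ∈ (V j).offDiag, (P.filter fun π => π p.1 = x ∧ π p.2 = y).card := by
    rw [Finset.card_eq_sum_card_fiberwise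
      (f := fun π : Equiv.Perm (Fin (3 * m)) => (π.symm x, π.symm y)) (t := (V j).offDiag)
      (fun π hπ => ?_)]
    · refine Finset.sum_congr rfl fun p hp => ?_
      congr 1
      ext π
      simp only [Finset.mem_filter, Finset.mem_offDiag] at hp ⊢
      constructor
      · rintro ⟨⟨hπP, -⟩, hpair⟩
        have h1 := congrArg Prod.fst hpair
        have h2 := congrArg Prod.snd hpair
        simp only at h1 h2
        exact ⟨hπP, by rw [← h1]; simp, by rw [← h2]; simp⟩
      · rintro ⟨hπP, hx1, hy1⟩
        refine ⟨⟨hπP, ?_⟩, ?_⟩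
        · intro z hz
          simp only [Finset.mem_insert, Finset.mem_singleton] at hz
          rcases hz with rfl | rfl
          · exact Finset.mem_image.2 ⟨p.1, hp.1, hx1⟩
          · exact Finset.mem_image.2 ⟨p.2, hp.2.1, hy1⟩
        · have : π.symm x = p.1 := by rw [← hx1]; simp
          have h2 : π.symm y = p.2 := by rw [← hy1]; simp
          exact Prod.ext this h2
    · simp only [Finset.mem_coe, Finset.mem_filter] at hπ
      have hx2 : x ∈ (V j).image π := hπ.2 (by simp)
      have hy2 : y ∈ (V j).image π := hπ.2 (by simp)
      rw [Finset.mem_image] at hx2 hy2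
      obtain ⟨c, hc, hcx⟩ := hx2
      obtain ⟨d, hd, hdy⟩ := hy2
      rw [Finset.mem_coe, Finset.mem_offDiag]
      refine ⟨by rw [← hcx]; simpa using hc, by rw [← hdy]; simpa using hd, ?_⟩
      exact fun heq => hxy (π.symm.injective heq)
  rw [hfib, Finset.sum_mul,
    Finset.sum_congr rfl (fun p hp => hP.2 p.1 p.2 x y (Finset.mem_offDiag.1 hp).2.2 hxy),
    Finset.sum_const, smul_eq_mul]

lemma key_ineq (m : ℕ) (hm : 1 ≤ m)
    (E : Fin m → Finset (Finset (Fin (3 * m))))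
    (hE2 : ∀ i, ∀ e ∈ E i, e.card = 2)
    (V : Fin (2 * m + 1) → Finset (Fin (3 * m)))
    (P : Finset (Equiv.Perm (Fin (3 * m)))) (hP : PairwiseIndepPerms (3 * m) P)
    (e : Finset (Fin (3 * m))) :
    ((Finset.univ.filter fun i => e ∈ E i).card : ℝ) ^ 2 *
        ((P.card : ℝ) * ((∑ j, ((V j).offDiag.card : ℝ)) /
          (3 * (m : ℝ) * (3 * (m : ℝ) - 1))) ^ 5)
      ≤ ∑ π ∈ P, ((Finset.univ.filter fun i => e ∈ E i).card : ℝ) ^ 2 *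
          ((Finset.univ.filter fun j => e ⊆ (V j).image π).card : ℝ) ^ 5 := by
  have hPpos : (0 : ℝ) < P.card := by exact_mod_cast Finset.card_pos.2 hP.1
  have hm1 : (1 : ℝ) ≤ (m : ℝ) := by exact_mod_cast hm
  have hR0 : (0 : ℝ) < 3 * (m : ℝ) * (3 * (m : ℝ) - 1) := by nlinarith
  have hcastR : ((3 * m * (3 * m - 1) : ℕ) : ℝ) = 3 * (m : ℝ) * (3 * (m : ℝ) - 1) := by
    have h1 : (1 : ℕ) ≤ 3 * m := by omega
    push_cast [Nat.cast_sub h1]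
    ring
  have hexp : ∀ x y : Fin (3 * m), x ≠ y →
      ∑ π ∈ P, ((Finset.univ.filter fun j =>
          ({x, y} : Finset (Fin (3 * m))) ⊆ (V j).image π).card : ℝ)
        = (P.card : ℝ) * (∑ j, ((V j).offDiag.card : ℝ)) /
            (3 * (m : ℝ) * (3 * (m : ℝ) - 1)) := by
    intro x y hxy
    have h := exp_count m hm V P hP x y hxy
    have h' : (∑ π ∈ P, ((Finset.univ.filter fun j =>
          ({x, y} : Finset (Fin (3 * m))) ⊆ (V j).image π).card : ℝ)) *
            (3 * (m : ℝ) * (3 * (m : ℝ) - 1))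
        = (∑ j, ((V j).offDiag.card : ℝ)) * (P.card : ℝ) := by
      rw [← hcastR]
      exact_mod_cast congrArg (fun n : ℕ => (n : ℝ)) h
    rw [eq_div_iff hR0.ne']
    linarith [h']
  rw [← Finset.mul_sum]
  by_cases ha : (Finset.univ.filter fun i => e ∈ E i).card = 0
  · rw [ha]
    simp only [Nat.cast_zero, ne_eq, OfNat.ofNat_ne_zero, not_false_eq_true, zero_pow,
      zero_mul, le_refl]
  · obtain ⟨i, hi⟩ : ∃ i, e ∈ E i := by
      obtain ⟨i, hi⟩ := Finset.card_pos.1 (Nat.pos_of_ne_zero ha)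
      exact ⟨i, (Finset.mem_filter.1 hi).2⟩
    obtain ⟨x, y, hxy, rfl⟩ := Finset.card_eq_two.1 (hE2 i _ hi)
    refine mul_le_mul_of_nonneg_left ?_ (by positivity)
    have hjensen := pow_sum_div_card_le_sum_pow (s := P)
      (f := fun π => ((Finset.univ.filter fun j =>
        ({x, y} : Finset (Fin (3 * m))) ⊆ (V j).image π).card : ℝ))
      (fun π _ => by positivity) 4
    rw [hexp x y hxy] at hjensen
    have heq : ((P.card : ℝ) * (∑ j, ((V j).offDiag.card : ℝ)) /
          (3 * (m : ℝ) * (3 * (m : ℝ) - 1))) ^ (4 + 1) / (P.card : ℝ) ^ 4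
        = (P.card : ℝ) * ((∑ j, ((V j).offDiag.card : ℝ)) /
          (3 * (m : ℝ) * (3 * (m : ℝ) - 1))) ^ 5 := by
      rw [mul_div_assoc, mul_pow]
      generalize ((∑ j, ((V j).offDiag.card : ℝ)) / (3 * (m : ℝ) * (3 * (m : ℝ) - 1))) = X
      field_simp
    rw [heq] at hjensen
    exact hjensen

lemma sq_lower (m : ℕ)
    (E : Fin m → Finset (Finset (Fin (3 * m))))
    (hE2 : ∀ i, ∀ e ∈ E i, e.card = 2)
    (hEsum : ((m : ℝ) / 2) * ((3 * m).choose 2 : ℝ) ≤ ∑ i, ((E i).card : ℝ))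
    (hm : 1 ≤ m) :
    (m : ℝ) ^ 2 * ((3 * m).choose 2 : ℝ) / 4
      ≤ ∑ e : Finset (Fin (3 * m)), ((Finset.univ.filter fun i => e ∈ E i).card : ℝ) ^ 2 := by
  have hC0 : (0 : ℝ) < ((3 * m).choose 2 : ℝ) := by
    have : 0 < (3 * m).choose 2 := Nat.choose_pos (by omega)
    exact_mod_cast this
  set S2 : Finset (Finset (Fin (3 * m))) :=
    Finset.univ.filter fun e => e.card = 2 with hS2def
  have hS2card : (S2.card : ℝ) = ((3 * m).choose 2 : ℝ) := by
    have h1 : S2 = Finset.powersetCard 2 Finset.univ := by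
      ext e
      simp [hS2def, Finset.mem_powersetCard_univ]
    rw [h1, Finset.card_powersetCard]
    simp
  have hsum2 : ∑ e ∈ S2, ((Finset.univ.filter fun i => e ∈ E i).card : ℝ)
      = ∑ i, ((E i).card : ℝ) := by
    have hnat : ∑ e ∈ S2, (Finset.univ.filter fun i => e ∈ E i).card
        = ∑ i, (E i).card := by
      simp only [Finset.card_filter]
      rw [Finset.sum_comm]
      refine Finset.sum_congr rfl fun i _ => ?_
      rw [← Finset.card_filter]
      congr 1
      ext e
      simp only [hS2def, Finset.mem_filter, Finset.mem_univ, true_and]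
      exact ⟨fun h => h.2, fun h => ⟨hE2 i e h, h⟩⟩
    exact_mod_cast congrArg (fun n : ℕ => (n : ℝ)) hnat
  have hCS := sq_sum_le_card_mul_sum_sq (s := S2)
    (f := fun e => ((Finset.univ.filter fun i => e ∈ E i).card : ℝ))
  rw [hS2card] at hCS
  have hsub : ∑ e ∈ S2, ((Finset.univ.filter fun i => e ∈ E i).card : ℝ) ^ 2
      ≤ ∑ e : Finset (Fin (3 * m)), ((Finset.univ.filter fun i => e ∈ E i).card : ℝ) ^ 2 :=
    Finset.sum_le_sum_of_subset_of_nonneg (Finset.subset_univ S2)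
      (fun e _ _ => by positivity)
  have hlow : ((m : ℝ) / 2) * ((3 * m).choose 2 : ℝ)
      ≤ ∑ e ∈ S2, ((Finset.univ.filter fun i => e ∈ E i).card : ℝ) := by
    rw [hsum2]; exact hEsum
  have h2 : (((m : ℝ) / 2) * ((3 * m).choose 2 : ℝ)) ^ 2
      ≤ (∑ e ∈ S2, ((Finset.univ.filter fun i => e ∈ E i).card : ℝ)) ^ 2 :=
    pow_le_pow_left₀ (by positivity) hlow 2
  have h3 : ((3 * m).choose 2 : ℝ) * ((m : ℝ) ^ 2 * ((3 * m).choose 2 : ℝ) / 4)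
      ≤ ((3 * m).choose 2 : ℝ) *
        ∑ e ∈ S2, ((Finset.univ.filter fun i => e ∈ E i).card : ℝ) ^ 2 := by
    calc ((3 * m).choose 2 : ℝ) * ((m : ℝ) ^ 2 * ((3 * m).choose 2 : ℝ) / 4)
        = (((m : ℝ) / 2) * ((3 * m).choose 2 : ℝ)) ^ 2 := by ring
      _ ≤ _ := h2.trans hCS
  exact (le_of_mul_le_mul_left h3 hC0).trans hsub

lemma offDiag_lower (m : ℕ) (hm : 1 ≤ m)
    (V : Fin (2 * m + 1) → Finset (Fin (3 * m)))
    (hVsum : (2 * (m : ℝ) + 1) * (3 * (m : ℝ) / 2) ≤ ∑ j, ((V j).card : ℝ)) :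
    (2 * (m : ℝ) + 1) * (3 * (m : ℝ) / 2) * (3 * (m : ℝ) / 2 - 1)
      ≤ ∑ j, ((V j).offDiag.card : ℝ) := by
  have hm1 : (1 : ℝ) ≤ (m : ℝ) := by exact_mod_cast hm
  have hCS := sq_sum_le_card_mul_sum_sq (s := (Finset.univ : Finset (Fin (2 * m + 1))))
    (f := fun j => ((V j).card : ℝ))
  have hKcard : (((Finset.univ : Finset (Fin (2 * m + 1))).card : ℕ) : ℝ)
      = 2 * (m : ℝ) + 1 := by
    simp only [Finset.card_univ, Fintype.card_fin]
    push_cast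
    ring
  rw [hKcard] at hCS
  have hBReq : ∑ j, ((V j).offDiag.card : ℝ)
      = (∑ j, ((V j).card : ℝ) ^ 2) - ∑ j, ((V j).card : ℝ) := by
    rw [← Finset.sum_sub_distrib]
    refine Finset.sum_congr rfl fun j _ => ?_
    rw [Finset.offDiag_card]
    have hle : (V j).card ≤ (V j).card * (V j).card := by
      rcases Nat.eq_zero_or_pos (V j).card with h | h
      · simp [h]
      · exact Nat.le_mul_of_pos_left _ h
    push_cast [Nat.cast_sub hle]
    ring
  rw [hBReq]
  have h1 : (0:ℝ) ≤ (∑ j, ((V j).card : ℝ)) - (2 * (m : ℝ) + 1) * (3 * (m : ℝ) / 2) := by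
    linarith
  have h2 : (0:ℝ) ≤ (∑ j, ((V j).card : ℝ)) + (2 * (m : ℝ) + 1) * (3 * (m : ℝ) / 2)
      - (2 * (m : ℝ) + 1) := by nlinarith
  have hint := mul_nonneg h1 h2
  have hK0 : (0:ℝ) < 2 * (m : ℝ) + 1 := by linarith
  nlinarith [hCS, hint, hK0]

lemma numeric_bound (m : ℕ) (hm : 1 ≤ m) (q : ℝ)
    (hq : (3 * (m : ℝ) - 2) / (4 * (3 * (m : ℝ) - 1)) ≤ q) :
    (1 / 2 ^ 12 : ℝ) - 31 / (3 * (m : ℝ) - 1) ≤ (1 / 4) * q ^ 5 := by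
  have hm1 : (1 : ℝ) ≤ (m : ℝ) := by exact_mod_cast hm
  have hu : (0 : ℝ) < 3 * (m : ℝ) - 1 := by linarith
  set x : ℝ := 1 / (3 * (m : ℝ) - 1) with hx
  have hx0 : 0 < x := by positivity
  have hx12 : x ≤ 1 / 2 := by
    rw [hx, div_le_div_iff₀ hu (by norm_num)]
    linarith
  have hq0eq : (3 * (m : ℝ) - 2) / (4 * (3 * (m : ℝ) - 1)) = (1 - x) / 4 := by
    rw [hx]
    field_simp
    ring
  have hb : 1 - 5 * x ≤ (1 - x) ^ 5 := by
    have h := one_add_mul_le_pow (a := -x) (by linarith) 5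
    norm_num at h
    linarith
  have hq0 : (0 : ℝ) ≤ (1 - x) / 4 := by linarith
  have hq5 : ((1 - x) / 4) ^ 5 ≤ q ^ 5 := pow_le_pow_left₀ hq0 (hq0eq ▸ hq) 5
  calc (1 / 2 ^ 12 : ℝ) - 31 / (3 * (m : ℝ) - 1) = 1 / 4096 - 31 * x := by
        rw [hx]; ring
    _ ≤ (1 / 4) * ((1 - x) / 4) ^ 5 := by
        have hexp : (1 / 4 : ℝ) * ((1 - x) / 4) ^ 5 = (1 - x) ^ 5 / 4096 := by ring
        rw [hexp]
        linarith
    _ ≤ (1 / 4) * q ^ 5 := by linarith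

lemma alg_id (B R K Pc M2 C : ℝ) (hR : R ≠ 0) (hK : K ≠ 0) (hPc : Pc ≠ 0)
    (hM2 : M2 ≠ 0) (hC : C ≠ 0) :
    (1 / 4) * (B / (R * K)) ^ 5
      = (1 / Pc) * (((M2 * C / 4) * (Pc * (B / R) ^ 5)) / (M2 * K ^ 5 * C)) := by
  field_simp

/-- Let `m ≥ 1` and fix a partition datum `(E,V)` on `{1,…,3m}` with
`Σᵢ |Eᵢ| ≥ (m/2)·C(3m,2)` and `Σⱼ |Vⱼ| ≥ (2m+1)·(3m/2)`.  Let `Π` be a pairwise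
independent set of permutations of `{1,…,3m}`.  Then
`(1/|Π|) Σ_{π ∈ Π} δ(E, πV) ≥ 2⁻¹² − 31/(3m−1)`, where `πV` is the family `j ↦ π(Vⱼ)`. -/
theorem stmt6 (m : ℕ) (hm : 1 ≤ m)
    (E : Fin m → Finset (Finset (Fin (3 * m))))
    (hE2 : ∀ i, ∀ e ∈ E i, e.card = 2)
    (V : Fin (2 * m + 1) → Finset (Fin (3 * m)))
    (hEsum : ((m : ℝ) / 2) * ((3 * m).choose 2 : ℝ) ≤ ∑ i, ((E i).card : ℝ))
    (hVsum : (2 * (m : ℝ) + 1) * (3 * (m : ℝ) / 2) ≤ ∑ j, ((V j).card : ℝ))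
    (P : Finset (Equiv.Perm (Fin (3 * m)))) (hP : PairwiseIndepPerms (3 * m) P) :
    (1 / 2 ^ 12 : ℝ) - 31 / (3 * (m : ℝ) - 1) ≤
      (1 / (P.card : ℝ)) * ∑ π ∈ P, density m E fun j => (V j).image π := by
  classical
  have hPpos : (0 : ℝ) < P.card := by exact_mod_cast Finset.card_pos.2 hP.1
  have hm1 : (1 : ℝ) ≤ (m : ℝ) := by exact_mod_cast hm
  have hC0 : (0 : ℝ) < ((3 * m).choose 2 : ℝ) := by
    have : 0 < (3 * m).choose 2 := Nat.choose_pos (by omega)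
    exact_mod_cast this
  have hR0 : (0 : ℝ) < 3 * (m : ℝ) * (3 * (m : ℝ) - 1) := by nlinarith
  have hK0 : (0 : ℝ) < 2 * (m : ℝ) + 1 := by linarith
  have hm0 : (0 : ℝ) < (m : ℝ) := by linarith
  have hD0 : (0 : ℝ) < (m : ℝ) ^ 2 * (2 * (m : ℝ) + 1) ^ 5 * ((3 * m).choose 2 : ℝ) := by
    positivity
  have hBR0 : (0 : ℝ) ≤ ∑ j, ((V j).offDiag.card : ℝ) :=
    Finset.sum_nonneg fun j _ => by positivity
  have hden : ∀ π : Equiv.Perm (Fin (3 * m)),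
      density m E (fun j => (V j).image π)
      = (∑ e : Finset (Fin (3 * m)),
          ((Finset.univ.filter fun i => e ∈ E i).card : ℝ) ^ 2 *
          ((Finset.univ.filter fun j => e ⊆ (V j).image π).card : ℝ) ^ 5) /
        ((m : ℝ) ^ 2 * (2 * (m : ℝ) + 1) ^ 5 * ((3 * m).choose 2 : ℝ)) := by
    intro π
    rw [density_eq m E (fun j => (V j).image π)]
    congr 1
    push_cast
    rfl
  simp only [hden]
  rw [← Finset.sum_div, Finset.sum_comm]
  -- key chained lower bounds
  have hT1 : (∑ e : Finset (Fin (3 * m)),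
        ((Finset.univ.filter fun i => e ∈ E i).card : ℝ) ^ 2) *
      ((P.card : ℝ) * ((∑ j, ((V j).offDiag.card : ℝ)) /
        (3 * (m : ℝ) * (3 * (m : ℝ) - 1))) ^ 5)
      ≤ ∑ e : Finset (Fin (3 * m)), ∑ π ∈ P,
          ((Finset.univ.filter fun i => e ∈ E i).card : ℝ) ^ 2 *
          ((Finset.univ.filter fun j => e ⊆ (V j).image π).card : ℝ) ^ 5 := by
    rw [Finset.sum_mul]
    exact Finset.sum_le_sum fun e _ => key_ineq m hm E hE2 V P hP e
  have hfac0 : (0 : ℝ) ≤ (P.card : ℝ) * ((∑ j, ((V j).offDiag.card : ℝ)) /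
      (3 * (m : ℝ) * (3 * (m : ℝ) - 1))) ^ 5 :=
    mul_nonneg hPpos.le (pow_nonneg (div_nonneg hBR0 hR0.le) 5)
  have hT2 : ((m : ℝ) ^ 2 * ((3 * m).choose 2 : ℝ) / 4) *
      ((P.card : ℝ) * ((∑ j, ((V j).offDiag.card : ℝ)) /
        (3 * (m : ℝ) * (3 * (m : ℝ) - 1))) ^ 5)
      ≤ (∑ e : Finset (Fin (3 * m)),
          ((Finset.univ.filter fun i => e ∈ E i).card : ℝ) ^ 2) *
        ((P.card : ℝ) * ((∑ j, ((V j).offDiag.card : ℝ)) /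
          (3 * (m : ℝ) * (3 * (m : ℝ) - 1))) ^ 5) :=
    mul_le_mul_of_nonneg_right (sq_lower m E hE2 hEsum hm) hfac0
  have hq : (3 * (m : ℝ) - 2) / (4 * (3 * (m : ℝ) - 1))
      ≤ (∑ j, ((V j).offDiag.card : ℝ)) /
        ((3 * (m : ℝ) * (3 * (m : ℝ) - 1)) * (2 * (m : ℝ) + 1)) := by
    rw [div_le_div_iff₀ (by linarith) (by positivity)]
    have hBRlow := offDiag_lower m hm V hVsum
    have heq : (3 * (m : ℝ) - 2) * ((3 * (m : ℝ) * (3 * (m : ℝ) - 1)) * (2 * (m : ℝ) + 1))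
        = ((2 * (m : ℝ) + 1) * (3 * (m : ℝ) / 2) * (3 * (m : ℝ) / 2 - 1)) *
          (4 * (3 * (m : ℝ) - 1)) := by ring
    rw [heq]
    exact mul_le_mul_of_nonneg_right hBRlow (by linarith)
  have hnb := numeric_bound m hm _ hq
  refine hnb.trans ?_
  have heqq : (1 / 4 : ℝ) * ((∑ j, ((V j).offDiag.card : ℝ)) /
      ((3 * (m : ℝ) * (3 * (m : ℝ) - 1)) * (2 * (m : ℝ) + 1))) ^ 5
      = (1 / (P.card : ℝ)) *
        ((((m : ℝ) ^ 2 * ((3 * m).choose 2 : ℝ) / 4) *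
          ((P.card : ℝ) * ((∑ j, ((V j).offDiag.card : ℝ)) /
            (3 * (m : ℝ) * (3 * (m : ℝ) - 1))) ^ 5)) /
        ((m : ℝ) ^ 2 * (2 * (m : ℝ) + 1) ^ 5 * ((3 * m).choose 2 : ℝ))) :=
    alg_id _ _ _ _ _ _ hR0.ne' hK0.ne' hPpos.ne' (by positivity) hC0.ne'
  rw [heqq]
  have hle := hT2.trans hT1
  gcongr
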